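/- Let L and n be natural numbers with L ≥ 1 and n ≥ 1, and let S be a finite set of natural numbers satisfying n·U_L ⊆ S ⊆ U_{n·(L−1)+1}, where n·U_L = {n·k : k = 0, 1, ..., L − 1}. Then S + U_n = U_{L·n}. -/
import Mathlib


open Finset Pointwise

theorem stmt_10 (L n : ℕ) (hL : 1 ≤ L) (hn : 1 ≤ n) (S : Finset ℕ)
    (hsub : (Finset.range L).image (fun k => n * k) ⊆ S)
    (hsup : S ⊆ Finset.range (n * (L - 1) + 1)) :
    S + Finset.range n = Finset.range (L * n) := by
  apply le_antisymm
  · intro x hx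
    rw [Finset.mem_add] at hx
    obtain ⟨s, hs, r, hr, rfl⟩ := hx
    have h1 := hsup hs
    simp only [Finset.mem_range] at *
    have : s ≤ n * (L - 1) := Nat.lt_succ_iff.mp h1
    have hL1 : n * (L - 1) + n = L * n := by
      cases L with
      | zero => omega
      | succ m => simp [Nat.succ_sub_one, Nat.mul_comm, Nat.mul_succ]
    omega
  · intro x hx
    rw [Finset.mem_range] at hx
    rw [Finset.mem_add]
    refine ⟨n * (x / n), hsub ?_, x % n, ?_, ?_⟩
    · simp only [Finset.mem_image, Finset.mem_range]
      exact ⟨x / n, by exact Nat.div_lt_of_lt_mul (by rwa [Nat.mul_comm] at hx), rfl⟩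
    · exact Finset.mem_range.mpr (Nat.mod_lt _ hn)
    · exact Nat.div_add_mod x n
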